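/- Let p be a prime, G = Z/pZ acting on a finite abelian p-group M with generator σ. Suppose the norm ν = 1 + σ + ... + σ^(p-1) annihilates M, and for M_i = {m ∈ M : m^((1-σ)^i) = 1}, each quotient M_{i+1}/M_i has order p for i = 0, ..., n-1 where n is minimal with M_n = M. Writing n = a(p-1) + b with 0 ≤ b ≤ p-2, then M ≅ (Z/p^(a+1)Z)^b × (Z/p^a Z)^(p-1-b). -/

import Mathlib

open Finset Polynomial


private lemma zmod_smul_ker_card (N d : ℕ) (hN : N ≠ 0) :
    Nat.card {x : ZMod N // d • x = 0} = N.gcd d := by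
  haveI : NeZero N := ⟨hN⟩
  classical
  let f : ZMod N →+ ZMod N :=
    { toFun := fun x => d • x
      map_zero' := smul_zero d
      map_add' := fun x y => smul_add d x y }
  have hker : Nat.card {x : ZMod N // d • x = 0} = Nat.card f.ker := by
    apply Nat.card_congr
    exact Equiv.subtypeEquivRight fun x => Iff.rfl
  have hrange : (f.range : AddSubgroup (ZMod N)) = AddSubgroup.zmultiples ((d : ℕ) : ZMod N) := by
    ext y
    constructor
    · rintro ⟨x, rfl⟩
      refine ⟨(x.val : ℤ), ?_⟩
      show (x.val : ℤ) • ((d : ℕ) : ZMod N) = d • x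
      rw [natCast_zsmul, nsmul_eq_mul, nsmul_eq_mul, mul_comm, ZMod.natCast_val, ZMod.cast_id]
    · rintro ⟨z, rfl⟩
      refine ⟨((z : ℤ) : ZMod N), ?_⟩
      show d • ((z : ℤ) : ZMod N) = (z : ℤ) • ((d : ℕ) : ZMod N)
      rw [zsmul_eq_mul, nsmul_eq_mul, mul_comm]
  have hcr : Nat.card f.range = N / N.gcd d := by
    rw [hrange, Nat.card_zmultiples, ZMod.addOrderOf_coe d hN]
  have h1 : Nat.card (ZMod N) = Nat.card (ZMod N ⧸ f.ker) * Nat.card f.ker :=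
    AddSubgroup.card_eq_card_quotient_mul_card_addSubgroup f.ker
  have h2 : Nat.card (ZMod N ⧸ f.ker) = N / N.gcd d := by
    rw [Nat.card_congr (QuotientAddGroup.quotientKerEquivRange f).toEquiv, hcr]
  rw [Nat.card_zmod, h2] at h1
  have hgdvd : N.gcd d ∣ N := Nat.gcd_dvd_left N d
  have hq : N / N.gcd d * N.gcd d = N := Nat.div_mul_cancel hgdvd
  have hqne : N / N.gcd d ≠ 0 := by
    intro h; rw [h, zero_mul] at hq; exact hN hq.symm
  rw [hker]
  apply Nat.eq_of_mul_eq_mul_left (Nat.pos_of_ne_zero hqne)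
  rw [← h1]
  exact hq.symm

private lemma gcd_pow_pow (p e k : ℕ) : (p^e).gcd (p^k) = p ^ min e k := by
  rcases le_total e k with h | h
  · rw [min_eq_left h, Nat.gcd_eq_left (pow_dvd_pow p h)]
  · rw [min_eq_right h, Nat.gcd_eq_right (pow_dvd_pow p h)]

private lemma zmod_pow_torsion (p e k : ℕ) (hp : p ≠ 0) :
    Nat.card {x : ZMod (p^e) // p^k • x = 0} = p ^ min k e := by
  rw [zmod_smul_ker_card _ _ (pow_ne_zero _ hp), gcd_pow_pow, min_comm]

private lemma pi_torsion_card {ι : Type*} [Fintype ι] (G : ι → Type*)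
    [∀ i, AddCommMonoid (G i)] (d : ℕ) :
    Nat.card {x : ∀ i, G i // d • x = 0} = ∏ i, Nat.card {y : G i // d • y = 0} := by
  rw [← Nat.card_pi]
  apply Nat.card_congr
  exact (Equiv.subtypeEquivRight fun x => by simp [funext_iff]).trans Equiv.subtypePiEquivPi

private lemma prod_torsion_card (C D : Type*) [AddCommMonoid C] [AddCommMonoid D] (d : ℕ) :
    Nat.card {x : C × D // d • x = 0} =
      Nat.card {c : C // d • c = 0} * Nat.card {y : D // d • y = 0} := by
  rw [← Nat.card_prod]
  apply Nat.card_congr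
  exact (Equiv.subtypeEquivRight fun x => by simp [Prod.ext_iff]).trans
    (Equiv.subtypeProdEquivProd)

private lemma torsion_card_congr {A B : Type*} [AddCommMonoid A] [AddCommMonoid B]
    (e : A ≃+ B) (d : ℕ) :
    Nat.card {x : A // d • x = 0} = Nat.card {x : B // d • x = 0} := by
  apply Nat.card_congr
  refine e.toEquiv.subtypeEquiv fun a => ?_
  constructor
  · intro h; show d • e a = 0; rw [← map_nsmul, h, map_zero]
  · intro h
    have : e (d • a) = e 0 := by rw [map_nsmul, map_zero]; exact h
    exact e.injective this

private lemma sum_min_succ {ι : Type*} [Fintype ι] (e : ι → ℕ) (k : ℕ) :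
    ∑ i, min (k+1) (e i) = ∑ i, min k (e i) + #{i | k < e i} := by
  classical
  rw [Finset.card_filter, ← Finset.sum_add_distrib]
  apply Finset.sum_congr rfl
  intro i _
  split_ifs with h <;> omega

private lemma card_subtype_eq_filter {γ : Type*} [Fintype γ] (g : γ → ℕ) (t : ℕ) :
    Nat.card {i // g i = t} = #{i | g i = t} := by
  classical
  rw [Nat.card_eq_fintype_card, Fintype.card_subtype]

private lemma filter_lt_split {γ : Type*} [Fintype γ] (g : γ → ℕ) (t : ℕ) :
    #{i | t < g i} = #{i | g i = t + 1} + #{i | t + 1 < g i} := by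
  classical
  rw [← Finset.card_union_of_disjoint]
  · congr 1
    ext i
    simp only [Finset.mem_filter, Finset.mem_union, Finset.mem_univ, true_and]
    omega
  · rw [Finset.disjoint_filter]
    intro i _ h1 h2
    omega

private lemma exists_reindex {ι κ : Type*} [Fintype ι] [Fintype κ] (e : ι → ℕ) (f : κ → ℕ)
    (he : ∀ i, e i ≠ 0) (hf : ∀ j, f j ≠ 0)
    (h : ∀ k, ∑ i, min k (e i) = ∑ j, min k (f j)) :
    ∃ φ : ι ≃ κ, ∀ i, f (φ i) = e i := by
  classical
  have hgt : ∀ k, #{i | k < e i} = #{j | k < f j} := by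
    intro k
    have h1 := h k
    have h2 := h (k+1)
    rw [sum_min_succ, sum_min_succ] at h2
    omega
  have hfiber : ∀ t, Nat.card {i // e i = t} = Nat.card {j // f j = t} := by
    intro t
    rw [card_subtype_eq_filter e t, card_subtype_eq_filter f t]
    match t with
    | 0 =>
      have h1 : ({i | e i = 0} : Finset ι) = ∅ := by
        ext i; simp [he i]
      have h2 : ({j | f j = 0} : Finset κ) = ∅ := by
        ext j; simp [hf j]
      rw [h1, h2]
      rfl
    | (t+1) =>
      have k1 := filter_lt_split e t
      have k2 := filter_lt_split f t
      have g1 := hgt t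
      have g2 := hgt (t+1)
      omega
  have hne : ∀ t, Nonempty ({i // e i = t} ≃ {j // f j = t}) :=
    fun t => Finite.card_eq.mp (hfiber t)
  let φ : ι ≃ κ :=
    (Equiv.sigmaFiberEquiv e).symm.trans
      ((Equiv.sigmaCongrRight fun t => (hne t).some).trans (Equiv.sigmaFiberEquiv f))
  refine ⟨φ, fun i => ?_⟩
  show f (((hne (e i)).some ⟨i, rfl⟩ : {j // f j = e i}) : κ) = e i
  exact ((hne (e i)).some ⟨i, rfl⟩).property

private def addEquivPiComp {ι κ : Type*} (φ : ι ≃ κ) (G : κ → Type*)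
    [∀ j, AddCommMonoid (G j)] : (∀ j, G j) ≃+ (∀ i, G (φ i)) :=
  { Equiv.piCongrLeft' G φ.symm with
    map_add' := fun _ _ => rfl }

section
variable {ι κ : Type*}

private def addEquivPiComp' (φ : ι ≃ κ) (G : κ → Type*)
    [∀ j, AddCommMonoid (G j)] : (∀ j, G j) ≃+ (∀ i, G (φ i)) :=
  { Equiv.piCongrLeft' G φ.symm with
    map_add' := fun _ _ => rfl }

private lemma pgroup_decomp (p : ℕ) (hp : p.Prime) (A : Type*) [AddCommGroup A] [Finite A]
    (NA : ℕ) (hA : Nat.card A = p ^ NA) :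
    ∃ (ι : Type) (_ : Fintype ι) (e : ι → ℕ), (∀ i, e i ≠ 0) ∧
      Nonempty (A ≃+ ∀ i, ZMod (p ^ e i)) := by
  obtain ⟨ι, hι, n, h1, ⟨eqv⟩⟩ := AddCommGroup.equiv_directSum_zmod_of_finite' A
  let eqv2 : A ≃+ ∀ i, ZMod (n i) := eqv.trans (DirectSum.addEquivProd _)
  have hcard : Nat.card A = ∏ i, n i := by
    rw [Nat.card_congr eqv2.toEquiv, Nat.card_pi]
    exact Finset.prod_congr rfl fun i _ => Nat.card_zmod (n i)
  have hdvd : ∀ i, n i ∣ p ^ NA := by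
    intro i
    rw [← hA, hcard]
    exact Finset.dvd_prod_of_mem n (Finset.mem_univ i)
  have : ∀ i, ∃ e : ℕ, n i = p ^ e := by
    intro i
    obtain ⟨e, -, he⟩ := (Nat.dvd_prime_pow hp).mp (hdvd i)
    exact ⟨e, he⟩
  choose e he using this
  refine ⟨ι, hι, e, fun i => ?_, ⟨eqv2.trans (AddEquiv.piCongrRight fun i =>
    (ZMod.ringEquivCongr (he i)).toAddEquiv)⟩⟩
  intro h0
  have := h1 i
  rw [he i, h0, pow_zero] at this
  omega

private lemma classify_by_torsion (p : ℕ) (hp : p.Prime) (A B : Type*)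
    [AddCommGroup A] [AddCommGroup B] [Finite A] [Finite B]
    (NA NB : ℕ) (hA : Nat.card A = p ^ NA) (hB : Nat.card B = p ^ NB)
    (h : ∀ k, Nat.card {x : A // p^k • x = 0} = Nat.card {x : B // p^k • x = 0}) :
    Nonempty (A ≃+ B) := by
  obtain ⟨ιA, _, e, he0, ⟨eA⟩⟩ := pgroup_decomp p hp A NA hA
  obtain ⟨ιB, _, f, hf0, ⟨eB⟩⟩ := pgroup_decomp p hp B NB hB
  have hcount : ∀ k, ∑ i, min k (e i) = ∑ j, min k (f j) := by
    intro k
    apply Nat.pow_right_injective hp.two_le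
    calc p ^ ∑ i, min k (e i) = ∏ i, p ^ min k (e i) := by rw [Finset.prod_pow_eq_pow_sum]
    _ = Nat.card {x : A // p^k • x = 0} := by
        rw [torsion_card_congr eA (p^k), pi_torsion_card]
        exact Finset.prod_congr rfl fun i _ =>
          (zmod_pow_torsion p (e i) k hp.ne_zero).symm
    _ = Nat.card {x : B // p^k • x = 0} := h k
    _ = ∏ j, p ^ min k (f j) := by
        rw [torsion_card_congr eB (p^k), pi_torsion_card]
        exact Finset.prod_congr rfl fun j _ =>
          zmod_pow_torsion p (f j) k hp.ne_zero
    _ = p ^ ∑ j, min k (f j) := by rw [Finset.prod_pow_eq_pow_sum]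
  obtain ⟨φ, hφ⟩ := exists_reindex e f he0 hf0 hcount
  have mid : (∀ i, ZMod (p ^ e i)) ≃+ (∀ j, ZMod (p ^ f j)) :=
    (AddEquiv.piCongrRight fun i =>
      (ZMod.ringEquivCongr (congrArg (p ^ ·) (hφ i).symm)).toAddEquiv).trans
      (addEquivPiComp' φ (fun j => ZMod (p ^ f j))).symm
  exact ⟨eA.trans (mid.trans eB.symm)⟩

end

private lemma m_side (p : ℕ) (hp : p.Prime) (M : Type*) [CommGroup M] [Finite M]
    (σ : M ≃* M)
    (hnorm : ∀ m : M, ∏ i ∈ Finset.range p, (σ ^ i) m = 1)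
    (n : ℕ)
    (hfull : ∀ m : M, (fun x => σ x * x⁻¹)^[n] m = 1)
    (hstep : ∀ i < n,
      Nat.card {m : M // (fun x => σ x * x⁻¹)^[i + 1] m = 1}
        = p * Nat.card {m : M // (fun x => σ x * x⁻¹)^[i] m = 1}) :
    Nat.card (Additive M) = p ^ n ∧
      ∀ k, Nat.card {x : Additive M // p ^ k • x = 0} = p ^ min (k * (p - 1)) n := by
  classical
  haveI : Fact p.Prime := ⟨hp⟩
  have hp2 : 2 ≤ p := hp.two_le
  set A := Additive M with hA
  let sa : A ≃+ A := MulEquiv.toAdditive σ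
  let s : AddMonoid.End A := sa.toAddMonoidHom
  let δ : AddMonoid.End A := s - 1
  have hs_apply : ∀ m : M, s (Additive.ofMul m) = Additive.ofMul (σ m) := fun m => rfl
  have hδ_apply : ∀ m : M, δ (Additive.ofMul m) = Additive.ofMul (σ m * m⁻¹) := by
    intro m
    show s (Additive.ofMul m) - Additive.ofMul m = Additive.ofMul (σ m * m⁻¹)
    rw [hs_apply, ← ofMul_div, div_eq_mul_inv]
  have hδpow : ∀ (i : ℕ) (m : M),
      (δ ^ i) (Additive.ofMul m) = Additive.ofMul ((fun x => σ x * x⁻¹)^[i] m) := by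
    intro i
    induction i with
    | zero => intro m; simp [pow_zero, AddMonoid.End.one_apply]
    | succ i ih =>
      intro m
      rw [Function.iterate_succ_apply, pow_succ]
      show (δ ^ i) (δ (Additive.ofMul m)) = _
      rw [hδ_apply, ih]
  have hspow : ∀ (i : ℕ) (m : M), (s ^ i) (Additive.ofMul m) = Additive.ofMul ((σ ^ i) m) := by
    intro i
    induction i with
    | zero => intro m; simp [pow_zero, AddMonoid.End.one_apply]
    | succ i ih =>
      intro m
      rw [pow_succ']
      show s ((s ^ i) (Additive.ofMul m)) = _
      rw [ih, hs_apply]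
      congr 1
      rw [pow_succ']
      rfl
  -- norm is zero
  have hν : (∑ i ∈ Finset.range p, s ^ i : AddMonoid.End A) = 0 := by
    apply AddMonoidHom.ext
    intro x
    refine (AddMonoidHom.finset_sum_apply (fun i => (s ^ i : A →+ A)) (Finset.range p) x).trans ?_
    show ∑ i ∈ Finset.range p, (s ^ i) (Additive.ofMul x.toMul) = 0
    have : ∀ i ∈ Finset.range p, (s ^ i) (Additive.ofMul x.toMul)
        = Additive.ofMul ((σ ^ i) x.toMul) := fun i _ => hspow i _
    rw [Finset.sum_congr rfl this, ← ofMul_prod, hnorm, ofMul_one]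
  -- polynomial identity
  obtain ⟨g, hg⟩ : ∃ g : ℤ[X], (X - 1) ^ (p - 1) = (∑ i ∈ Finset.range p, X ^ i) + C (p : ℤ) * g := by
    have hdvd : C (p : ℤ) ∣ ((X - 1) ^ (p - 1) - ∑ i ∈ Finset.range p, X ^ i) := by
      rw [C_dvd_iff_dvd_coeff]
      intro i
      have hmap : (((X : ℤ[X]) - 1) ^ (p - 1) - ∑ i ∈ Finset.range p, X ^ i).map
          (Int.castRingHom (ZMod p)) = 0 := by
        have hXne : (X : (ZMod p)[X]) - 1 ≠ 0 := by
          have := Polynomial.X_sub_C_ne_zero (1 : ZMod p)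
          rwa [Polynomial.C_1] at this
        have h2 : ((X : (ZMod p)[X]) - 1) ^ (p - 1) = ∑ i ∈ Finset.range p, X ^ i := by
          apply mul_right_cancel₀ hXne
          rw [geom_sum_mul, ← pow_succ, Nat.sub_add_cancel hp.one_le]
          rw [sub_pow_char]
          simp
        rw [Polynomial.map_sub, Polynomial.map_pow, Polynomial.map_sub, Polynomial.map_X,
          Polynomial.map_one, Polynomial.map_sum]
        simp only [Polynomial.map_pow, Polynomial.map_X]
        rw [h2, sub_self]
      have := congrArg (fun q => Polynomial.coeff q i) hmap
      simp only [Polynomial.coeff_map, Polynomial.coeff_zero] at this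
      exact (ZMod.intCast_zmod_eq_zero_iff_dvd _ p).mp this
    obtain ⟨g, hgg⟩ := hdvd
    exact ⟨g, by rw [← hgg]; ring⟩
  -- evaluate at s
  have hΦ : aeval s (∑ i ∈ Finset.range p, (X : ℤ[X]) ^ i) = 0 := by
    rw [map_sum]
    simp only [map_pow, aeval_X]
    exact hν
  have hδE : aeval s ((X : ℤ[X]) - 1) = δ := by
    rw [map_sub, aeval_X, map_one]
  set G := aeval s g with hG
  have hkey : δ ^ (p - 1) = (p : AddMonoid.End A) * G := by
    have h1 := congrArg (aeval s) hg
    rw [map_pow, hδE, map_add, hΦ, map_mul, aeval_C, zero_add] at h1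
    rw [h1]
    norm_num
    rfl
  -- value of g at 1
  have hg1 : g.eval 1 = -1 := by
    have h1 := congrArg (Polynomial.eval 1) hg
    have hpm1 : p - 1 ≠ 0 := by omega
    simp only [Polynomial.eval_pow, Polynomial.eval_sub, Polynomial.eval_X,
      Polynomial.eval_one, sub_self, zero_pow hpm1, Polynomial.eval_add,
      Polynomial.eval_finset_sum, Polynomial.eval_mul, Polynomial.eval_C,
      one_pow, Finset.sum_const, Finset.card_range, nsmul_eq_mul, mul_one] at h1
    have hp0 : (p : ℤ) ≠ 0 := by exact_mod_cast hp.ne_zero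
    have : (p : ℤ) * (1 + g.eval 1) = 0 := by linarith
    rcases mul_eq_zero.mp this with h | h
    · exact absurd h hp0
    · linarith
  -- decompose g
  obtain ⟨h, hh⟩ := Polynomial.X_sub_C_dvd_sub_C_eval (a := (1:ℤ)) (p := g)
  set H := aeval s h with hH
  have hGdecomp : G = -1 + δ * H := by
    have : g = C (g.eval 1) + (X - C 1) * h := by rw [← hh]; ring
    have h2 := congrArg (aeval s) this
    rw [hG, h2, map_add, map_mul, aeval_C, hg1, map_sub, aeval_X, aeval_C]
    norm_num
    rfl
  have hcomm : δ * H = H * δ := by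
    have h0 : ((X : ℤ[X]) - 1) * h = h * (X - 1) := mul_comm _ _
    have h1 := congrArg (aeval s) h0
    rw [map_mul, map_mul, hδE] at h1
    exact h1
  set N := δ * H with hN
  have hnil : δ ^ n = 0 := by
    apply AddMonoidHom.ext
    intro x
    show (δ ^ n) (Additive.ofMul x.toMul) = 0
    rw [hδpow, hfull, ofMul_one]
  have hNnil : N ^ n = 0 := by
    have hc : Commute δ H := hcomm
    rw [hN, hc.mul_pow n, hnil, zero_mul]
  -- G injective
  have hGN : G = N - 1 := by rw [hGdecomp, hN, neg_add_eq_sub]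
  have hSG : (∑ i ∈ Finset.range n, N ^ i) * G = -1 := by
    rw [hGN, geom_sum_mul, hNnil, zero_sub]
  have hone : (-(∑ i ∈ Finset.range n, N ^ i)) * G = 1 := by
    have h2 : (-(∑ i ∈ Finset.range n, N ^ i)) * G
        = -((∑ i ∈ Finset.range n, N ^ i) * G) := neg_mul (α := AddMonoid.End A) _ _
    rw [h2, hSG, neg_neg]
  have hinjG : ∀ x : A, G x = 0 → x = 0 := by
    intro x hx
    have h1 : (1 : AddMonoid.End A) x = 0 := by
      rw [← hone]
      show (-(∑ i ∈ Finset.range n, N ^ i)) (G x) = 0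
      rw [hx, map_zero]
    rwa [AddMonoid.End.one_apply] at h1
  have hinjGk : ∀ (k : ℕ) (x : A), (G ^ k) x = 0 → x = 0 := by
    intro k
    induction k with
    | zero => intro x hx; rwa [pow_zero, AddMonoid.End.one_apply] at hx
    | succ k ih =>
      intro x hx
      rw [pow_succ] at hx
      exact hinjG x (ih (G x) hx)
  -- torsion vs filtration
  have htors : ∀ (k : ℕ) (x : A), p ^ k • x = 0 ↔ (δ ^ (k * (p - 1))) x = 0 := by
    intro k x
    have hpow : δ ^ (k * (p - 1)) = ((p ^ k : ℕ) : AddMonoid.End A) * G ^ k := by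
      rw [mul_comm k (p - 1), pow_mul, hkey,
        (Nat.cast_commute p G).mul_pow k, Nat.cast_pow]
    have happ : (δ ^ (k * (p - 1))) x = (G ^ k) (p ^ k • x) := by
      rw [hpow]
      show ((p ^ k : ℕ) : AddMonoid.End A) ((G ^ k) x) = _
      rw [AddMonoid.End.natCast_apply, ← map_nsmul]
    constructor
    · intro hx; rw [happ, hx, map_zero]
    · intro hx; rw [happ] at hx; exact hinjGk k _ hx
  -- cardinality translation
  have hcard_tr : ∀ i : ℕ, Nat.card {x : A // (δ ^ i) x = 0}
      = Nat.card {m : M // (fun x => σ x * x⁻¹)^[i] m = 1} := by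
    intro i
    apply Nat.card_congr
    refine (Additive.ofMul.subtypeEquiv fun m => ?_).symm
    rw [hδpow i m, ofMul_eq_zero]
  have hc : ∀ i, i ≤ n → Nat.card {x : A // (δ ^ i) x = 0} = p ^ i := by
    intro i
    induction i with
    | zero =>
      intro _
      have huniq : ∀ x : A, (δ ^ 0) x = 0 ↔ x = 0 := fun x => by
        rw [pow_zero, AddMonoid.End.one_apply]
      rw [Nat.card_congr (Equiv.subtypeEquivRight huniq), pow_zero]
      haveI : Unique {x : A // x = 0} := ⟨⟨⟨0, rfl⟩⟩, fun y => Subtype.ext y.2⟩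
      exact Nat.card_unique
    | succ i ih =>
      intro hi
      rw [hcard_tr, hstep i (by omega), ← hcard_tr, ih (by omega), pow_succ, mul_comm]
  have hzap : ∀ x : A, (δ ^ n) x = 0 := fun x => by rw [hnil]; rfl
  have hfulltop : ∀ i, n ≤ i → ∀ x : A, (δ ^ i) x = 0 := by
    intro i hi x
    have h2 : δ ^ i = δ ^ n * δ ^ (i - n) := by rw [← pow_add]; congr 1; omega
    rw [h2, hnil, zero_mul]; rfl
  have hctop : ∀ i, n ≤ i → Nat.card {x : A // (δ ^ i) x = 0} = p ^ n := by
    intro i hi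
    rw [← hc n le_rfl]
    apply Nat.card_congr
    exact Equiv.subtypeEquivRight fun x =>
      ⟨fun _ => hzap x, fun _ => hfulltop i hi x⟩
  constructor
  · rw [← hc n le_rfl]
    exact (Nat.card_congr (Equiv.subtypeUnivEquiv hzap)).symm
  · intro k
    rw [Nat.card_congr (Equiv.subtypeEquivRight (htors k))]
    rcases le_total (k * (p - 1)) n with hle | hle
    · rw [min_eq_left hle, hc _ hle]
    · rw [min_eq_right hle, hctop _ hle]

private lemma arith_min (p a b k n : ℕ) (hp : 2 ≤ p) (hb : b ≤ p - 2)
    (hn : n = a * (p - 1) + b) :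
    b * min k (a + 1) + (p - 1 - b) * min k a = min (k * (p - 1)) n := by
  have hbq : b ≤ p - 1 := by omega
  rcases le_or_gt k a with hk | hk
  · rw [min_eq_left (by omega : k ≤ a + 1), min_eq_left hk, min_eq_left]
    · rw [← Nat.add_mul, Nat.add_sub_cancel' hbq, mul_comm]
    · calc k * (p - 1) ≤ a * (p - 1) := Nat.mul_le_mul_right _ hk
      _ ≤ n := by omega
  · rw [min_eq_right (by omega : a + 1 ≤ k), min_eq_right (le_of_lt hk), min_eq_right]
    · have h1 : (p - 1 - b) * a = (p - 1) * a - b * a := Nat.sub_mul _ _ _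
      have h2 : b * a ≤ (p - 1) * a := Nat.mul_le_mul_right _ hbq
      have h3 : b * (a + 1) = b * a + b := by ring
      have h4 : a * (p - 1) = (p - 1) * a := mul_comm _ _
      omega
    · have h5 : (a + 1) * (p - 1) ≤ k * (p - 1) := Nat.mul_le_mul_right _ (by omega)
      have h6 : (a + 1) * (p - 1) = a * (p - 1) + (p - 1) := by ring
      omega

private lemma target_count (p a b : ℕ) (hp : p ≠ 0) (k : ℕ) :
    Nat.card {x : (Fin b → ZMod (p ^ (a + 1))) × (Fin (p - 1 - b) → ZMod (p ^ a)) //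
        p ^ k • x = 0}
      = p ^ (b * min k (a + 1) + (p - 1 - b) * min k a) := by
  have h1 : ∏ i : Fin b, Nat.card {y : ZMod (p ^ (a + 1)) // p ^ k • y = 0}
      = p ^ (b * min k (a + 1)) := by
    calc ∏ i : Fin b, Nat.card {y : ZMod (p ^ (a + 1)) // p ^ k • y = 0}
        = ∏ i : Fin b, p ^ min k (a + 1) :=
          Finset.prod_congr rfl fun i _ => zmod_pow_torsion p (a + 1) k hp
    _ = (p ^ min k (a + 1)) ^ b := by
          rw [Finset.prod_const, Finset.card_univ, Fintype.card_fin]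
    _ = p ^ (b * min k (a + 1)) := by rw [← pow_mul, mul_comm]
  have h2 : ∏ i : Fin (p - 1 - b), Nat.card {y : ZMod (p ^ a) // p ^ k • y = 0}
      = p ^ ((p - 1 - b) * min k a) := by
    calc ∏ i : Fin (p - 1 - b), Nat.card {y : ZMod (p ^ a) // p ^ k • y = 0}
        = ∏ i : Fin (p - 1 - b), p ^ min k a :=
          Finset.prod_congr rfl fun i _ => zmod_pow_torsion p a k hp
    _ = (p ^ min k a) ^ (p - 1 - b) := by
          rw [Finset.prod_const, Finset.card_univ, Fintype.card_fin]
    _ = p ^ ((p - 1 - b) * min k a) := by rw [← pow_mul, mul_comm]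
  rw [prod_torsion_card, pi_torsion_card, pi_torsion_card, h1, h2, pow_add]

private lemma target_card (p a b : ℕ) (hp : p ≠ 0) :
    Nat.card ((Fin b → ZMod (p ^ (a + 1))) × (Fin (p - 1 - b) → ZMod (p ^ a)))
      = p ^ (b * (a + 1) + (p - 1 - b) * a) := by
  haveI : NeZero (p ^ (a + 1)) := ⟨pow_ne_zero _ hp⟩
  haveI : NeZero (p ^ a) := ⟨pow_ne_zero _ hp⟩
  rw [Nat.card_prod, Nat.card_fun, Nat.card_fun, Nat.card_zmod, Nat.card_zmod,
    Nat.card_eq_fintype_card, Nat.card_eq_fintype_card, Fintype.card_fin, Fintype.card_fin,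
    ← pow_mul, ← pow_mul, ← pow_add, mul_comm (a + 1) b, mul_comm a (p - 1 - b)]

/-- Gras's structure theorem (Lemma 4): `M` a finite abelian `p`-group with an action of
`⟨σ⟩` of order `p` killed by the algebraic norm `ν = 1 + σ + ⋯ + σ^{p-1}`; with
`M_i = ker (1-σ)^i`, `n` minimal with `M_n = M`, `n = a(p-1) + b`, `0 ≤ b ≤ p-2`, and all
quotients `M_{i+1}/M_i` of order `p`, one has `M ≃ (ℤ/p^{a+1})^b × (ℤ/p^a)^{p-1-b}`. -/
theorem stmt7 (p : ℕ) (hp : p.Prime) (M : Type*) [CommGroup M] [Finite M]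
    (hM : IsPGroup p M) (σ : M ≃* M) (hσp : σ ^ p = 1)
    (hnorm : ∀ m : M, ∏ i ∈ Finset.range p, (σ ^ i) m = 1)
    (n a b : ℕ) (hb : b ≤ p - 2) (hn : n = a * (p - 1) + b)
    (hfull : ∀ m : M, (fun x => σ x * x⁻¹)^[n] m = 1)
    (hmin : ∀ i < n, ∃ m : M, (fun x => σ x * x⁻¹)^[i] m ≠ 1)
    (hstep : ∀ i < n,
      Nat.card {m : M // (fun x => σ x * x⁻¹)^[i + 1] m = 1}
        = p * Nat.card {m : M // (fun x => σ x * x⁻¹)^[i] m = 1}) :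
    Nonempty (M ≃*
      Multiplicative ((Fin b → ZMod (p ^ (a + 1))) × (Fin (p - 1 - b) → ZMod (p ^ a)))) := by
  obtain ⟨hcardA, hcountA⟩ := m_side p hp M σ hnorm n hfull hstep
  haveI : NeZero (p ^ (a + 1)) := ⟨pow_ne_zero _ hp.ne_zero⟩
  haveI : NeZero (p ^ a) := ⟨pow_ne_zero _ hp.ne_zero⟩
  have hclass := classify_by_torsion p hp (Additive M)
    ((Fin b → ZMod (p ^ (a + 1))) × (Fin (p - 1 - b) → ZMod (p ^ a)))
    n (b * (a + 1) + (p - 1 - b) * a) hcardA (target_card p a b hp.ne_zero) ?_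
  · obtain ⟨e⟩ := hclass
    exact ⟨MulEquiv.toAdditive.symm e⟩
  · intro k
    rw [hcountA k, target_count p a b hp.ne_zero k,
      arith_min p a b k n hp.two_le hb hn]
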